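/- There exists C > 0 such that for every α ∈ [−1,1] and every g ∈ H¹(−1,1) with g(α) = 0, ∫_{−1}^{1} |g(x)/(x−α)| dx ≤ C·(∫_{−1}^{1} |g'(s)|²√(1−s²) ds)^{1/2}. -/

import Mathlib

open MeasureTheory Set intervalIntegral


lemma aux_sqrt_sub {x y : ℝ} (hy : 0 ≤ y) (hxy : y ≤ x) :
    Real.sqrt x - Real.sqrt y ≤ Real.sqrt (x - y) := by
  have h2 : x ≤ (Real.sqrt (x - y) + Real.sqrt y) ^ 2 := by
    have a1 := Real.sq_sqrt (sub_nonneg.2 hxy)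
    have a2 := Real.sq_sqrt hy
    have a3 := Real.sqrt_nonneg (x - y)
    have a4 := Real.sqrt_nonneg y
    nlinarith
  have h1 : Real.sqrt x ≤ Real.sqrt (x - y) + Real.sqrt y := by
    calc Real.sqrt x ≤ Real.sqrt ((Real.sqrt (x - y) + Real.sqrt y) ^ 2) := Real.sqrt_le_sqrt h2
    _ = _ := Real.sqrt_sq (by positivity)
  linarith

lemma aux_ii1 (a b : ℝ) :
    IntervalIntegrable (fun t : ℝ => (1 - t) ^ (-(1/2) : ℝ)) volume a b := by
  have := (intervalIntegrable_rpow' (r := -(1/2)) (by norm_num)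
    (a := 1 - a) (b := 1 - b)).comp_sub_left 1
  simpa using this

lemma aux_ii2 (a b : ℝ) :
    IntervalIntegrable (fun t : ℝ => (1 + t) ^ (-(1/2) : ℝ)) volume a b := by
  have := (intervalIntegrable_rpow' (r := -(1/2)) (by norm_num)
    (a := a + 1) (b := b + 1)).comp_add_right 1
  simpa [add_comm] using this

lemma aux_int1 (a b : ℝ) :
    ∫ t in a..b, (1 - t) ^ (-(1/2) : ℝ) =
      2 * Real.sqrt (1 - a) - 2 * Real.sqrt (1 - b) := by
  have h := intervalIntegral.integral_comp_sub_left (a := a) (b := b)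
    (fun x : ℝ => x ^ (-(1/2) : ℝ)) 1
  rw [h, integral_rpow (Or.inl (by norm_num))]
  rw [Real.sqrt_eq_rpow, Real.sqrt_eq_rpow]
  norm_num
  ring

lemma aux_int2 (a b : ℝ) :
    ∫ t in a..b, (1 + t) ^ (-(1/2) : ℝ) =
      2 * Real.sqrt (1 + b) - 2 * Real.sqrt (1 + a) := by
  have h := intervalIntegral.integral_comp_add_right (a := a) (b := b)
    (fun x : ℝ => x ^ (-(1/2) : ℝ)) 1
  rw [show (fun t : ℝ => (1 + t) ^ (-(1/2) : ℝ)) = (fun t : ℝ => (t + 1) ^ (-(1/2) : ℝ)) by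
    funext t; rw [add_comm], h, integral_rpow (Or.inl (by norm_num))]
  rw [Real.sqrt_eq_rpow, Real.sqrt_eq_rpow]
  norm_num
  ring


lemma aux_ptwise {t : ℝ} (h1 : -1 ≤ t) (h2 : t ≤ 1) :
    (Real.sqrt (1 - t ^ 2))⁻¹ ≤ (1 - t) ^ (-(1/2) : ℝ) + (1 + t) ^ (-(1/2) : ℝ) := by
  have e1 : (1 - t) ^ (-(1/2) : ℝ) = (Real.sqrt (1 - t))⁻¹ := by
    rw [Real.rpow_neg (by linarith), Real.sqrt_eq_rpow]
  have e2 : (1 + t) ^ (-(1/2) : ℝ) = (Real.sqrt (1 + t))⁻¹ := by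
    rw [Real.rpow_neg (by linarith), Real.sqrt_eq_rpow]
  rw [e1, e2]
  rcases le_total 0 t with ht | ht
  · rcases eq_or_lt_of_le h2 with rfl | hlt
    · norm_num
    · have hpos : 0 < 1 - t := by linarith
      have hle : 1 - t ≤ 1 - t ^ 2 := by nlinarith
      have : (Real.sqrt (1 - t ^ 2))⁻¹ ≤ (Real.sqrt (1 - t))⁻¹ :=
        inv_anti₀ (Real.sqrt_pos.2 hpos) (Real.sqrt_le_sqrt hle)
      have h0 : (0:ℝ) ≤ (Real.sqrt (1 + t))⁻¹ := by positivity
      linarith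
  · rcases eq_or_lt_of_le h1 with rfl | hlt
    · norm_num
    · have hpos : 0 < 1 + t := by linarith
      have hle : 1 + t ≤ 1 - t ^ 2 := by nlinarith
      have : (Real.sqrt (1 - t ^ 2))⁻¹ ≤ (Real.sqrt (1 + t))⁻¹ :=
        inv_anti₀ (Real.sqrt_pos.2 hpos) (Real.sqrt_le_sqrt hle)
      have h0 : (0:ℝ) ≤ (Real.sqrt (1 - t))⁻¹ := by positivity
      linarith

lemma aux_invsqrt_integrable {a b : ℝ} (ha : -1 ≤ a) (hab : a ≤ b) (hb : b ≤ 1) :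
    IntervalIntegrable (fun t : ℝ => (Real.sqrt (1 - t ^ 2))⁻¹) volume a b := by
  refine ((aux_ii1 a b).add (aux_ii2 a b)).mono_fun' ?_ ?_
  · exact ((Real.continuous_sqrt.comp (by continuity)).measurable.inv).aestronglyMeasurable
  · rw [uIoc_of_le hab]
    filter_upwards [ae_restrict_mem measurableSet_Ioc] with t ht
    have h1 : -1 ≤ t := le_trans ha ht.1.le
    have h2 : t ≤ 1 := le_trans ht.2 hb
    have hnn : (0:ℝ) ≤ (Real.sqrt (1 - t ^ 2))⁻¹ := by positivity
    simpa [Real.norm_eq_abs, abs_inv, abs_of_nonneg (Real.sqrt_nonneg _)] using aux_ptwise h1 h2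

lemma aux_invsqrt_bound {a b : ℝ} (ha : -1 ≤ a) (hab : a ≤ b) (hb : b ≤ 1) :
    ∫ t in a..b, (Real.sqrt (1 - t ^ 2))⁻¹ ≤ 4 * Real.sqrt (b - a) := by
  have h1 : ∫ t in a..b, (Real.sqrt (1 - t ^ 2))⁻¹ ≤
      ∫ t in a..b, ((1 - t) ^ (-(1/2) : ℝ) + (1 + t) ^ (-(1/2) : ℝ)) := by
    refine intervalIntegral.integral_mono_on hab (aux_invsqrt_integrable ha hab hb)
      ((aux_ii1 a b).add (aux_ii2 a b)) (fun t ht => ?_)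
    exact aux_ptwise (le_trans ha ht.1) (le_trans ht.2 hb)
  rw [intervalIntegral.integral_add (aux_ii1 a b) (aux_ii2 a b), aux_int1, aux_int2] at h1
  have e1 : Real.sqrt (1 - a) - Real.sqrt (1 - b) ≤ Real.sqrt (b - a) := by
    have := aux_sqrt_sub (x := 1 - a) (y := 1 - b) (by linarith) (by linarith)
    simpa using this
  have e2 : Real.sqrt (1 + b) - Real.sqrt (1 + a) ≤ Real.sqrt (b - a) := by
    have := aux_sqrt_sub (x := 1 + b) (y := 1 + a) (by linarith) (by linarith)
    simpa using this
  linarith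

set_option maxHeartbeats 1000000 in
lemma aux_CS {c d : ℝ} (hc : -1 ≤ c) (hcd : c ≤ d) (hd : d ≤ 1)
    {g' : ℝ → ℝ} (hg'1 : IntervalIntegrable g' volume (-1) 1)
    (hg'2 : IntervalIntegrable (fun s => g' s ^ 2) volume (-1) 1) :
    ∫ t in c..d, |g' t| ≤
      Real.sqrt (∫ s in (-1:ℝ)..1, |g' s| ^ 2 * Real.sqrt (1 - s ^ 2)) *
        (2 * Real.sqrt (Real.sqrt (d - c))) := by
  set μ := volume.restrict (Ioc c d) with hμ
  have hsub : Ioc c d ⊆ Ioc (-1:ℝ) 1 := Ioc_subset_Ioc hc hd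
  have hμle : μ ≤ volume.restrict (Ioc (-1:ℝ) 1) := Measure.restrict_mono hsub le_rfl
  set F := fun t : ℝ => |g' t| * Real.sqrt (Real.sqrt (1 - t ^ 2)) with hF
  set H := fun t : ℝ => (Real.sqrt (Real.sqrt (1 - t ^ 2)))⁻¹ with hH
  have hg'm : AEStronglyMeasurable g' μ := hg'1.1.aestronglyMeasurable.mono_measure hμle
  have habs : AEStronglyMeasurable (fun t => |g' t|) μ := by
    simpa [Real.norm_eq_abs] using hg'm.norm
  have hwcont : Continuous fun t : ℝ => Real.sqrt (Real.sqrt (1 - t ^ 2)) :=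
    Real.continuous_sqrt.comp (Real.continuous_sqrt.comp (continuous_const.sub (continuous_pow 2)))
  have hFm : AEStronglyMeasurable F μ := habs.mul hwcont.aestronglyMeasurable
  have hHm : AEStronglyMeasurable H μ := (hwcont.measurable.inv).aestronglyMeasurable
  have hF2 : (fun t => F t ^ 2) = fun t => g' t ^ 2 * Real.sqrt (1 - t ^ 2) := by
    funext t
    rw [hF, mul_pow, sq_abs, Real.sq_sqrt (Real.sqrt_nonneg _)]
  have hH2 : (fun t => H t ^ 2) = fun t : ℝ => (Real.sqrt (1 - t ^ 2))⁻¹ := by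
    funext t
    rw [hH, inv_pow, Real.sq_sqrt (Real.sqrt_nonneg _)]
  have hg'2m : AEStronglyMeasurable (fun t => g' t ^ 2) μ := by
    exact (hg'm.mul hg'm).congr (Filter.Eventually.of_forall fun t => (sq (g' t)).symm)
  have hIntF2 : Integrable (fun t => g' t ^ 2 * Real.sqrt (1 - t ^ 2)) μ := by
    refine (hg'2.1.mono_set hsub).mono'
      (hg'2m.mul (Real.continuous_sqrt.comp (continuous_const.sub (continuous_pow 2))).aestronglyMeasurable) ?_
    refine Filter.Eventually.of_forall fun t => ?_
    have h1 : Real.sqrt (1 - t ^ 2) ≤ 1 := Real.sqrt_le_one.mpr (by nlinarith [sq_nonneg t])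
    have h0 : (0:ℝ) ≤ Real.sqrt (1 - t ^ 2) := Real.sqrt_nonneg _
    rw [Real.norm_eq_abs, abs_of_nonneg (by positivity)]
    nlinarith [sq_nonneg (g' t)]
  have hIntH2 : Integrable (fun t : ℝ => (Real.sqrt (1 - t ^ 2))⁻¹) μ :=
    (aux_invsqrt_integrable hc hcd hd).1
  have h2e : (ENNReal.ofReal (2:ℝ)) = 2 := by simp
  have hFmem : MemLp F (ENNReal.ofReal (2:ℝ)) μ := by
    rw [h2e]
    exact (memLp_two_iff_integrable_sq hFm).2 (by rw [hF2]; exact hIntF2)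
  have hHmem : MemLp H (ENNReal.ofReal (2:ℝ)) μ := by
    rw [h2e]
    exact (memLp_two_iff_integrable_sq hHm).2 (by rw [hH2]; exact hIntH2)
  have hconj : Real.HolderConjugate 2 2 := Real.holderConjugate_iff.2 ⟨one_lt_two, by norm_num⟩
  have holder := MeasureTheory.integral_mul_le_Lp_mul_Lq_of_nonneg hconj
    (Filter.Eventually.of_forall fun t => by positivity)
    (Filter.Eventually.of_forall fun t => by positivity) hFmem hHmem
  -- LHS equals ∫ |g'| dμ
  have hae1 : ∀ᵐ t ∂μ, t ∈ Ioc c d := ae_restrict_mem measurableSet_Ioc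
  have hne1 : ∀ᵐ t ∂μ, t ≠ 1 ∨ t ∈ (∅ : Set ℝ) := by
    refine (ae_iff).2 ?_
    have : μ {(1:ℝ)} = 0 :=
      le_antisymm (le_trans (Measure.restrict_apply_le _ _) (by simp)) zero_le
    simpa using this
  have hFH : ∀ᵐ t ∂μ, F t * H t = |g' t| := by
    filter_upwards [hae1, hne1] with t ht htne
    have ht1 : t < 1 := lt_of_le_of_ne (le_trans ht.2 hd) (by simpa using htne)
    have htm1 : -1 < t := lt_of_le_of_lt hc ht.1
    have hpos : (0:ℝ) < 1 - t ^ 2 := by nlinarith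
    have hs : (0:ℝ) < Real.sqrt (Real.sqrt (1 - t ^ 2)) :=
      Real.sqrt_pos.2 (Real.sqrt_pos.2 hpos)
    simp only [hF, hH]
    field_simp
  have hLHS : ∫ t in c..d, |g' t| = ∫ t, F t * H t ∂μ := by
    rw [intervalIntegral.integral_of_le hcd]
    exact (integral_congr_ae hFH).symm
  rw [hLHS]
  refine le_trans holder ?_
  -- now bound the two factors
  have hrpow2 : ∀ x : ℝ, x ^ (2:ℝ) = x ^ 2 := fun x => by
    rw [show (2:ℝ) = ((2:ℕ):ℝ) by norm_num, Real.rpow_natCast]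
  have hfac1 : (∫ t, F t ^ (2:ℝ) ∂μ) ^ ((1:ℝ)/2) ≤
      Real.sqrt (∫ s in (-1:ℝ)..1, |g' s| ^ 2 * Real.sqrt (1 - s ^ 2)) := by
    rw [← Real.sqrt_eq_rpow]
    refine Real.sqrt_le_sqrt ?_
    have e : ∫ t, F t ^ (2:ℝ) ∂μ = ∫ t, g' t ^ 2 * Real.sqrt (1 - t ^ 2) ∂μ := by
      simp_rw [hrpow2]
      rw [hF2]
    rw [e, intervalIntegral.integral_of_le (by norm_num : (-1:ℝ) ≤ 1)]
    simp_rw [sq_abs]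
    have hm2 : AEStronglyMeasurable (fun t => g' t ^ 2) (volume.restrict (Ioc (-1:ℝ) 1)) := by
      exact (hg'1.1.aestronglyMeasurable.mul hg'1.1.aestronglyMeasurable).congr
        (Filter.Eventually.of_forall fun t => (sq (g' t)).symm)
    have hmw : AEStronglyMeasurable (fun t => g' t ^ 2 * Real.sqrt (1 - t ^ 2))
        (volume.restrict (Ioc (-1:ℝ) 1)) :=
      hm2.mul (Real.continuous_sqrt.comp
        (continuous_const.sub (continuous_pow 2))).aestronglyMeasurable
    have hbig : IntegrableOn (fun t => g' t ^ 2 * Real.sqrt (1 - t ^ 2)) (Ioc (-1:ℝ) 1) volume := by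
      refine hg'2.1.mono' hmw (Filter.Eventually.of_forall fun t => ?_)
      have h1 : Real.sqrt (1 - t ^ 2) ≤ 1 := Real.sqrt_le_one.mpr (by nlinarith [sq_nonneg t])
      have h0 : (0:ℝ) ≤ Real.sqrt (1 - t ^ 2) := Real.sqrt_nonneg _
      rw [Real.norm_eq_abs, abs_of_nonneg (by positivity)]
      nlinarith [sq_nonneg (g' t)]
    exact setIntegral_mono_set hbig
      (Filter.Eventually.of_forall fun t => by positivity) hsub.eventuallyLE
  have hfac2 : (∫ t, H t ^ (2:ℝ) ∂μ) ^ ((1:ℝ)/2) ≤ 2 * Real.sqrt (Real.sqrt (d - c)) := by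
    rw [← Real.sqrt_eq_rpow]
    have e : ∫ t, H t ^ (2:ℝ) ∂μ = ∫ t in c..d, (Real.sqrt (1 - t ^ 2))⁻¹ := by
      simp_rw [hrpow2]
      rw [hH2, intervalIntegral.integral_of_le hcd]
    calc Real.sqrt (∫ t, H t ^ (2:ℝ) ∂μ) ≤ Real.sqrt (4 * Real.sqrt (d - c)) := by
          refine Real.sqrt_le_sqrt ?_
          rw [e]; exact aux_invsqrt_bound hc hcd hd
      _ = 2 * Real.sqrt (Real.sqrt (d - c)) := by
          rw [Real.sqrt_mul (by norm_num), show Real.sqrt 4 = 2 by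
            rw [show (4:ℝ) = 2 ^ 2 by norm_num, Real.sqrt_sq (by norm_num)]]
  refine mul_le_mul hfac1 hfac2 ?_ (Real.sqrt_nonneg _)
  rw [← Real.sqrt_eq_rpow]
  exact Real.sqrt_nonneg _

set_option maxHeartbeats 1000000 in
/-- There exists C > 0 so that for every α ∈ [−1,1] and every g ∈ H¹(−1,1) with g(α) = 0
(represented by its absolutely continuous representative with square-integrable
derivative g'):
∫_{−1}^1 |g(x)/(x−α)| dx ≤ C·(∫_{−1}^1 |g'(s)|²√(1−s²) ds)^{1/2}. -/
theorem integral_bound_of_vanishing_H1 :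
    ∃ C : ℝ, 0 < C ∧ ∀ α ∈ Set.Icc (-1 : ℝ) 1, ∀ g g' : ℝ → ℝ,
      IntervalIntegrable g' MeasureTheory.volume (-1) 1 →
      IntervalIntegrable (fun s => g' s ^ 2) MeasureTheory.volume (-1) 1 →
      (∀ x ∈ Set.Icc (-1 : ℝ) 1, g x = ∫ t in α..x, g' t) →
      ∫ x in (-1 : ℝ)..1, |g x / (x - α)| ≤
        C * (∫ s in (-1 : ℝ)..1, |g' s| ^ 2 * Real.sqrt (1 - s ^ 2)) ^ ((1 : ℝ) / 2) := by
  refine ⟨32, by norm_num, ?_⟩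
  rintro α ⟨hα1, hα2⟩ g g' hg'1 hg'2 hg
  set X := ∫ s in (-1:ℝ)..1, |g' s| ^ 2 * Real.sqrt (1 - s ^ 2) with hXdef
  have hX0 : 0 ≤ X :=
    intervalIntegral.integral_nonneg (by norm_num) (fun s _ => by positivity)
  have hXr : X ^ ((1:ℝ)/2) = Real.sqrt X := (Real.sqrt_eq_rpow X).symm
  have key : ∀ x ∈ Icc (-1:ℝ) 1, |g x| ≤
      Real.sqrt X * (2 * Real.sqrt (Real.sqrt |x - α|)) := by
    intro x hx
    rw [hg x hx]
    rcases le_total α x with h | h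
    · have h1 : |∫ t in α..x, g' t| ≤ ∫ t in α..x, |g' t| :=
        intervalIntegral.abs_integral_le_integral_abs h
      have h2 := aux_CS hα1 h hx.2 hg'1 hg'2
      rw [abs_of_nonneg (sub_nonneg.2 h)]
      exact le_trans h1 h2
    · have h1 : |∫ t in α..x, g' t| ≤ ∫ t in x..α, |g' t| := by
        rw [intervalIntegral.integral_symm x α, abs_neg]
        exact intervalIntegral.abs_integral_le_integral_abs h
      have h2 := aux_CS hx.1 h hα2 hg'1 hg'2
      rw [abs_sub_comm, abs_of_nonneg (sub_nonneg.2 h)]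
      exact le_trans h1 h2
  have hsq : ∀ u : ℝ, 0 < u → Real.sqrt (Real.sqrt u) / u = u ^ (-(3/4) : ℝ) := by
    intro u hu
    rw [Real.sqrt_eq_rpow, Real.sqrt_eq_rpow, ← Real.rpow_mul hu.le, div_eq_mul_inv,
      ← Real.rpow_neg_one u, ← Real.rpow_add hu]
    norm_num
  have bound1 : ∀ x ∈ Icc α 1, |g x / (x - α)| ≤
      Real.sqrt X * 2 * (x - α) ^ (-(3/4):ℝ) := by
    intro x hx
    rcases eq_or_lt_of_le hx.1 with heq | hlt
    · have hg0 : g x = 0 := by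
        rw [← heq, hg α ⟨hα1, hα2⟩, intervalIntegral.integral_same]
      rw [hg0, ← heq]
      simp [Real.zero_rpow (show (-(3/4):ℝ) ≠ 0 by norm_num)]
    · have hxI : x ∈ Icc (-1:ℝ) 1 := ⟨le_trans hα1 hx.1, hx.2⟩
      have hu : 0 < x - α := sub_pos.2 hlt
      have hk := key x hxI
      rw [abs_of_pos hu] at hk
      calc |g x / (x - α)| = |g x| * (x - α)⁻¹ := by
            rw [abs_div, abs_of_pos hu, div_eq_mul_inv]
        _ ≤ (Real.sqrt X * (2 * Real.sqrt (Real.sqrt (x - α)))) * (x - α)⁻¹ :=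
            mul_le_mul_of_nonneg_right hk (by positivity)
        _ = Real.sqrt X * 2 * (Real.sqrt (Real.sqrt (x - α)) / (x - α)) := by ring
        _ = Real.sqrt X * 2 * (x - α) ^ (-(3/4):ℝ) := by rw [hsq _ hu]
  have bound2 : ∀ x ∈ Icc (-1:ℝ) α, |g x / (x - α)| ≤
      Real.sqrt X * 2 * (α - x) ^ (-(3/4):ℝ) := by
    intro x hx
    rcases eq_or_lt_of_le hx.2 with heq | hlt
    · have hg0 : g x = 0 := by
        rw [heq, hg α ⟨hα1, hα2⟩, intervalIntegral.integral_same]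
      rw [hg0, heq]
      simp [Real.zero_rpow (show (-(3/4):ℝ) ≠ 0 by norm_num)]
    · have hxI : x ∈ Icc (-1:ℝ) 1 := ⟨hx.1, le_trans hx.2 hα2⟩
      have hu : 0 < α - x := sub_pos.2 hlt
      have hk := key x hxI
      rw [abs_sub_comm, abs_of_pos hu] at hk
      calc |g x / (x - α)| = |g x| * (α - x)⁻¹ := by
            rw [abs_div, abs_sub_comm, abs_of_pos hu, div_eq_mul_inv]
        _ ≤ (Real.sqrt X * (2 * Real.sqrt (Real.sqrt (α - x)))) * (α - x)⁻¹ :=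
            mul_le_mul_of_nonneg_right hk (by positivity)
        _ = Real.sqrt X * 2 * (Real.sqrt (Real.sqrt (α - x)) / (α - x)) := by ring
        _ = Real.sqrt X * 2 * (α - x) ^ (-(3/4):ℝ) := by rw [hsq _ hu]
  have hD1 : IntervalIntegrable (fun x => (x - α) ^ (-(3/4):ℝ)) volume α 1 := by
    have := (intervalIntegrable_rpow' (r := -(3/4)) (by norm_num)
      (a := 0) (b := 1 - α)).comp_sub_right α
    simpa using this
  have hD2 : IntervalIntegrable (fun x => (α - x) ^ (-(3/4):ℝ)) volume (-1) α := by
    have := (intervalIntegrable_rpow' (r := -(3/4)) (by norm_num)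
      (a := α + 1) (b := 0)).comp_sub_left α
    simpa using this
  have hcont : ContinuousOn (fun b => ∫ t in α..b, g' t) (Set.uIcc (-1:ℝ) 1) :=
    intervalIntegral.continuousOn_primitive_interval' hg'1 (by
      rw [Set.uIcc_of_le (by norm_num : (-1:ℝ) ≤ 1)]; exact ⟨hα1, hα2⟩)
  have hIccu : Set.uIcc (-1:ℝ) 1 = Icc (-1:ℝ) 1 := Set.uIcc_of_le (by norm_num)
  have hFmeas : AEStronglyMeasurable (fun b => ∫ t in α..b, g' t)
      (volume.restrict (Set.uIcc (-1:ℝ) 1)) :=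
    hcont.aestronglyMeasurable measurableSet_uIcc
  have hmeas : ∀ s : Set ℝ, s ⊆ Icc (-1:ℝ) 1 → MeasurableSet s →
      AEStronglyMeasurable (fun x => |g x / (x - α)|) (volume.restrict s) := by
    intro s hs hsm
    have hm0 : AEStronglyMeasurable (fun x => (∫ t in α..x, g' t) * (x - α)⁻¹)
        (volume.restrict s) :=
      (hFmeas.mono_measure (Measure.restrict_mono (by rw [hIccu]; exact hs) le_rfl)).mul
        ((measurable_id.sub_const α).inv.aestronglyMeasurable)
    have hm1 : AEStronglyMeasurable (fun x => g x / (x - α)) (volume.restrict s) := by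
      refine hm0.congr ?_
      filter_upwards [ae_restrict_mem hsm] with x hx
      rw [div_eq_mul_inv, hg x (hs hx)]
    simpa [Real.norm_eq_abs, abs_div] using hm1.norm
  have intg1 : IntervalIntegrable (fun x => |g x / (x - α)|) volume α 1 := by
    refine (hD1.const_mul (Real.sqrt X * 2)).mono_fun ?_ ?_
    · rw [Set.uIoc_of_le hα2]
      exact hmeas _ (fun x hx => ⟨le_trans hα1 hx.1.le, hx.2⟩) measurableSet_Ioc
    · rw [Set.uIoc_of_le hα2]
      filter_upwards [ae_restrict_mem measurableSet_Ioc] with x hx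
      have hb := bound1 x (Ioc_subset_Icc_self hx)
      have h0 : 0 ≤ (x - α) ^ (-(3/4):ℝ) :=
        Real.rpow_nonneg (by linarith [hx.1]) _
      rw [Real.norm_eq_abs, Real.norm_eq_abs, abs_abs,
        abs_of_nonneg (mul_nonneg (by positivity) h0)]
      exact hb
  have intg2 : IntervalIntegrable (fun x => |g x / (x - α)|) volume (-1) α := by
    refine (hD2.const_mul (Real.sqrt X * 2)).mono_fun ?_ ?_
    · rw [Set.uIoc_of_le hα1]
      exact hmeas _ (fun x hx => ⟨hx.1.le, le_trans hx.2 hα2⟩) measurableSet_Ioc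
    · rw [Set.uIoc_of_le hα1]
      filter_upwards [ae_restrict_mem measurableSet_Ioc] with x hx
      have hb := bound2 x (Ioc_subset_Icc_self hx)
      have h0 : 0 ≤ (α - x) ^ (-(3/4):ℝ) :=
        Real.rpow_nonneg (by linarith [hx.2]) _
      rw [Real.norm_eq_abs, Real.norm_eq_abs, abs_abs,
        abs_of_nonneg (mul_nonneg (by positivity) h0)]
      exact hb
  have hi1 : ∫ x in α..1, (x - α) ^ (-(3/4):ℝ) ≤ 8 := by
    rw [intervalIntegral.integral_comp_sub_right (fun u : ℝ => u ^ (-(3/4):ℝ)) α,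
      show α - α = (0:ℝ) by ring, integral_rpow (Or.inl (by norm_num)),
      Real.zero_rpow (show (-(3/4) + 1 : ℝ) ≠ 0 by norm_num), sub_zero,
      div_le_iff₀ (by norm_num : (0:ℝ) < -(3/4) + 1)]
    calc (1 - α) ^ (-(3/4) + 1 : ℝ) ≤ (2:ℝ) ^ (-(3/4) + 1 : ℝ) :=
          Real.rpow_le_rpow (by linarith) (by linarith) (by norm_num)
      _ ≤ (2:ℝ) ^ (1:ℝ) := Real.rpow_le_rpow_of_exponent_le (by norm_num) (by norm_num)
      _ = 2 := Real.rpow_one 2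
      _ ≤ 8 * (-(3/4) + 1) := by norm_num
  have hi2 : ∫ x in (-1:ℝ)..α, (α - x) ^ (-(3/4):ℝ) ≤ 8 := by
    rw [intervalIntegral.integral_comp_sub_left (fun u : ℝ => u ^ (-(3/4):ℝ)) α,
      show α - α = (0:ℝ) by ring, show α - (-1:ℝ) = α + 1 by ring,
      integral_rpow (Or.inl (by norm_num)),
      Real.zero_rpow (show (-(3/4) + 1 : ℝ) ≠ 0 by norm_num), sub_zero,
      div_le_iff₀ (by norm_num : (0:ℝ) < -(3/4) + 1)]
    calc (α + 1) ^ (-(3/4) + 1 : ℝ) ≤ (2:ℝ) ^ (-(3/4) + 1 : ℝ) :=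
          Real.rpow_le_rpow (by linarith) (by linarith) (by norm_num)
      _ ≤ (2:ℝ) ^ (1:ℝ) := Real.rpow_le_rpow_of_exponent_le (by norm_num) (by norm_num)
      _ = 2 := Real.rpow_one 2
      _ ≤ 8 * (-(3/4) + 1) := by norm_num
  have s1 : ∫ x in α..1, |g x / (x - α)| ≤ Real.sqrt X * 2 * 8 := by
    calc ∫ x in α..1, |g x / (x - α)|
        ≤ ∫ x in α..1, Real.sqrt X * 2 * (x - α) ^ (-(3/4):ℝ) :=
          intervalIntegral.integral_mono_on hα2 intg1 (hD1.const_mul _) bound1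
      _ = Real.sqrt X * 2 * ∫ x in α..1, (x - α) ^ (-(3/4):ℝ) :=
          intervalIntegral.integral_const_mul _ _
      _ ≤ Real.sqrt X * 2 * 8 :=
          mul_le_mul_of_nonneg_left hi1 (by positivity)
  have s2 : ∫ x in (-1:ℝ)..α, |g x / (x - α)| ≤ Real.sqrt X * 2 * 8 := by
    calc ∫ x in (-1:ℝ)..α, |g x / (x - α)|
        ≤ ∫ x in (-1:ℝ)..α, Real.sqrt X * 2 * (α - x) ^ (-(3/4):ℝ) :=
          intervalIntegral.integral_mono_on hα1 intg2 (hD2.const_mul _) bound2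
      _ = Real.sqrt X * 2 * ∫ x in (-1:ℝ)..α, (α - x) ^ (-(3/4):ℝ) :=
          intervalIntegral.integral_const_mul _ _
      _ ≤ Real.sqrt X * 2 * 8 :=
          mul_le_mul_of_nonneg_left hi2 (by positivity)
  have hsplit := intervalIntegral.integral_add_adjacent_intervals intg2 intg1
  rw [← hsplit, hXr]
  linarith [s1, s2]
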